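/- arXiv:1310.4642 — 3 statements merged into one kernel-verified Lean document; each statement's English description precedes it below -/
import Mathlib

section
/- Let (W,S) be a Coxeter system, u = (s_1,...,s_l) a sequence of simple reflections, and γ = (γ_1,...,γ_l) a subexpression of u, i.e. γ_j ∈ {e, s_j} for all j. Then the product γ_1 γ_2 ⋯ γ_l is less than or equal to s_1 * s_2 * ⋯ * s_l in the Bruhat order, where * is the Demazure (monoid) product. -/
namespace DBS
open CoxeterSystem
open scoped Classical

variable {B W : Type*} [Group W] {M : CoxeterMatrix B} (cs : CoxeterSystem M W)

/-- Bruhat order on a Coxeter group: `u ≤ w` iff some reduced word for `w`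
has a subword with product `u`. -/
def bruhatLE (u w : W) : Prop :=
  ∃ ω : List B, cs.IsReduced ω ∧ cs.wordProd ω = w ∧
    ∃ ω' : List B, ω'.Sublist ω ∧ cs.wordProd ω' = u

/-- Strict Bruhat order. -/
def bruhatLT (u w : W) : Prop := bruhatLE cs u w ∧ u ≠ w

/-- Demazure product `s * w = max{sw, w}` in Bruhat order. -/
noncomputable def demL (i : B) (w : W) : W :=
  if bruhatLT cs w (cs.simple i * w) then cs.simple i * w else w

/-- `s ▷ w = min{sw, w}` in Bruhat order. -/
noncomputable def minL (i : B) (w : W) : W :=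
  if bruhatLT cs (cs.simple i * w) w then cs.simple i * w else w

/-- `w ◁ s = min{ws, w}` in Bruhat order. -/
noncomputable def demR (w : W) (i : B) : W :=
  if bruhatLT cs (w * cs.simple i) w then w * cs.simple i else w

/-- Demazure product `s₁ * (s₂ * (⋯ * s_l))` of a word of simple reflections. -/
noncomputable def dprodWord (ω : List B) : W := ω.foldr (demL cs) 1

/-- Demazure product of the sequence of simple reflections indexed by `u`. -/
noncomputable def dprodFn {l : ℕ} (u : Fin l → B) : W := dprodWord cs (List.ofFn u)

/-- Partial product `γ^j = γ₁ ⋯ γ_j`. -/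
noncomputable def pp {l : ℕ} (γ : Fin l → W) (j : ℕ) : W := ((List.ofFn γ).take j).prod

/-- `γ` is a subexpression of the word of simple reflections indexed by `u`. -/
def IsSubexpr {l : ℕ} (u : Fin l → B) (γ : Fin l → W) : Prop :=
  ∀ j : Fin l, γ j = 1 ∨ γ j = cs.simple (u j)

/-- `γ` is a positive subexpression: `γ^{j-1} = γ^j ◁ s_j` for all `j`. -/
def IsPositive {l : ℕ} (u : Fin l → B) (γ : Fin l → W) : Prop :=
  ∀ j : Fin l, pp γ (j : ℕ) = demR cs (pp γ ((j : ℕ) + 1)) (u j)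

/-- The reflection cocycle endomorphism of `W × Bool`. -/
noncomputable def eta (i : B) : Function.End (W × Bool) :=
  fun p => (cs.simple i * p.1 * cs.simple i,
    if p.1 = cs.simple i then !p.2 else p.2)

theorem eta_prod (l : List B) (p : W × Bool) :
    (l.map (eta cs)).prod p =
      (cs.wordProd l * p.1 * (cs.wordProd l)⁻¹,
        if Odd ((cs.rightInvSeq l).count p.1) then !p.2 else p.2) := by
  induction l generalizing p with
  | nil =>
    show p = _
    simp
  | cons i l ih =>
    have h1 : ((i :: l).map (eta cs)).prod p = eta cs i ((l.map (eta cs)).prod p) := rfl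
    rw [h1, ih]
    have hris : cs.rightInvSeq (i :: l) =
        ((cs.wordProd l)⁻¹ * cs.simple i * cs.wordProd l) :: cs.rightInvSeq l := rfl
    have hcount : (cs.rightInvSeq (i :: l)).count p.1 =
        (cs.rightInvSeq l).count p.1
          + (if p.1 = (cs.wordProd l)⁻¹ * cs.simple i * cs.wordProd l then 1 else 0) := by
      rw [hris, List.count_cons]
      simp only [beq_iff_eq]
      rcases eq_or_ne p.1 ((cs.wordProd l)⁻¹ * cs.simple i * cs.wordProd l) with h | h
      · rw [if_pos h.symm, if_pos h]
      · rw [if_neg (Ne.symm h), if_neg h]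
    have hcond : (cs.wordProd l * p.1 * (cs.wordProd l)⁻¹ = cs.simple i)
        ↔ p.1 = (cs.wordProd l)⁻¹ * cs.simple i * cs.wordProd l := by
      constructor
      · intro h
        rw [← h]
        group
      · intro h
        rw [h]
        group
    show (cs.simple i * (cs.wordProd l * p.1 * (cs.wordProd l)⁻¹) * cs.simple i, _) = _
    have hfst : cs.simple i * (cs.wordProd l * p.1 * (cs.wordProd l)⁻¹) * cs.simple i =
        cs.wordProd (i :: l) * p.1 * (cs.wordProd (i :: l))⁻¹ := by
      rw [cs.wordProd_cons]
      rw [mul_inv_rev, cs.inv_simple]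
      group
    refine Prod.ext hfst ?_
    show (if cs.wordProd l * p.1 * (cs.wordProd l)⁻¹ = cs.simple i
        then !(if Odd ((cs.rightInvSeq l).count p.1) then !p.2 else p.2)
        else (if Odd ((cs.rightInvSeq l).count p.1) then !p.2 else p.2)) = _
    rw [hcount, if_congr hcond rfl rfl]
    by_cases hc : p.1 = (cs.wordProd l)⁻¹ * cs.simple i * cs.wordProd l
    · simp only [if_pos hc]
      by_cases ho : Odd ((cs.rightInvSeq l).count p.1) <;>
        simp [ho, Nat.odd_add_one]
    · simp only [if_neg hc, add_zero]

/-- Alternating word `[i, j, i, j, ...]` of length `2 * m`. -/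
def altword (i j : B) : ℕ → List B
  | 0 => []
  | m + 1 => i :: j :: altword i j m

theorem altword_prod (i j : B) (m : ℕ) :
    cs.wordProd (altword i j m) = (cs.simple i * cs.simple j) ^ m := by
  induction m with
  | zero => simp [altword]
  | succ m ih =>
    rw [altword, cs.wordProd_cons, cs.wordProd_cons, ih, pow_succ']
    group

theorem sum_range_double {N : Type*} [AddCommMonoid N] (f : ℕ → N) (m : ℕ) :
    ∑ r ∈ Finset.range m, (f (2 * r + 1) + f (2 * r)) = ∑ k ∈ Finset.range (2 * m), f k := by
  induction m with
  | zero => simp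
  | succ m ih =>
    rw [Finset.sum_range_succ, ih, show 2 * (m + 1) = (2 * m + 1) + 1 by ring,
      Finset.sum_range_succ, Finset.sum_range_succ]
    abel

theorem sum_range_add' {N : Type*} [AddCommMonoid N] (f : ℕ → N) (p q : ℕ) :
    ∑ k ∈ Finset.range (p + q), f k
      = ∑ k ∈ Finset.range p, f k + ∑ k ∈ Finset.range q, f (p + k) := by
  induction q with
  | zero => simp
  | succ q ih =>
    rw [show p + (q + 1) = (p + q) + 1 by ring, Finset.sum_range_succ, ih,
      Finset.sum_range_succ, add_assoc]

theorem sum_range_split {N : Type*} [AddCommMonoid N] (f : ℕ → N) (m : ℕ) :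
    ∑ k ∈ Finset.range (2 * m), f k
      = ∑ k ∈ Finset.range m, f k + ∑ k ∈ Finset.range m, f (m + k) := by
  rw [show 2 * m = m + m by ring, sum_range_add' f m m]

/-- Pure group computation: if `a² = b² = 1` and `(a*b)^m = 1`, then the total
multiplicity of any `t` among the `2m` elements
`x⁻ʳ (b a b) xʳ, x⁻ʳ b xʳ` (`r < m`, `x := a * b`) is even. -/
theorem pure_even (a b : W) (ha : a * a = 1) (hb : b * b = 1) (m : ℕ)
    (hx : (a * b) ^ m = 1) (t : W) :
    Even (∑ r ∈ Finset.range m,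
      ((if t = ((a * b)⁻¹) ^ r * (b * a * b) * (a * b) ^ r then 1 else 0)
        + (if t = ((a * b)⁻¹) ^ r * b * (a * b) ^ r then 1 else 0) : ℕ)) := by
  set x := a * b with hxdef
  have ib : b⁻¹ = b := inv_eq_of_mul_eq_one_right hb
  have hb' : ∀ z : W, b * (b * z) = z := fun z => by rw [← mul_assoc, hb, one_mul]
  have hbk : ∀ k : ℕ, b * x ^ k * b = (x⁻¹) ^ k := by
    intro k
    induction k with
    | zero => simpa using hb
    | succ k ihk =>
      have : b * x ^ (k + 1) * b = (b * x ^ k * b) * (b * x * b) := by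
        rw [pow_succ]
        simp [mul_assoc, hb']
      rw [this, ihk]
      have hbxb : b * x * b = x⁻¹ := by
        rw [hxdef, mul_inv_rev, ib, show a⁻¹ = a from inv_eq_of_mul_eq_one_right ha]
        simp [mul_assoc, hb, ha, hb']
      rw [hbxb, pow_succ]
  -- rewrite the two conditions
  have cond1 : ∀ r : ℕ, (t = (x⁻¹) ^ r * (b * a * b) * x ^ r) ↔ (b * t = x ^ (2 * r + 1)) := by
    intro r
    rw [← mul_right_inj b]
    constructor
    · intro h
      rw [h]
      have : b * ((x⁻¹) ^ r * (b * a * b) * x ^ r) = (b * (x⁻¹) ^ r * b) * (a * b) * x ^ r := by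
        simp [mul_assoc, hb']
      rw [this]
      have h2 : b * (x⁻¹) ^ r * b = x ^ r := by
        rw [show (x⁻¹ : W) ^ r = (x ^ r)⁻¹ from (inv_pow x r), show b * (x ^ r)⁻¹ * b = (b * x ^ r * b)⁻¹ by rw [mul_inv_rev, mul_inv_rev, ib]; group, hbk r, inv_pow, inv_inv]
      rw [h2, ← hxdef, show x ^ r * x * x ^ r = x ^ (2 * r + 1) by rw [← pow_succ, ← pow_add]; congr 1; ring]
    · intro h
      rw [h]
      have : b * ((x⁻¹) ^ r * (b * a * b) * x ^ r) = (b * (x⁻¹) ^ r * b) * (a * b) * x ^ r := by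
        simp [mul_assoc, hb']
      rw [this]
      have h2 : b * (x⁻¹) ^ r * b = x ^ r := by
        rw [show (x⁻¹ : W) ^ r = (x ^ r)⁻¹ from (inv_pow x r), show b * (x ^ r)⁻¹ * b = (b * x ^ r * b)⁻¹ by rw [mul_inv_rev, mul_inv_rev, ib]; group, hbk r, inv_pow, inv_inv]
      rw [h2, ← hxdef, show x ^ r * x * x ^ r = x ^ (2 * r + 1) by rw [← pow_succ, ← pow_add]; congr 1; ring]
  have cond2 : ∀ r : ℕ, (t = (x⁻¹) ^ r * b * x ^ r) ↔ (b * t = x ^ (2 * r)) := by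
    intro r
    rw [← mul_right_inj b]
    have : b * ((x⁻¹) ^ r * b * x ^ r) = (b * (x⁻¹) ^ r * b) * x ^ r := by
      simp [mul_assoc]
    rw [this]
    have h2 : b * (x⁻¹) ^ r * b = x ^ r := by
      rw [show (x⁻¹ : W) ^ r = (x ^ r)⁻¹ from (inv_pow x r), show b * (x ^ r)⁻¹ * b = (b * x ^ r * b)⁻¹ by rw [mul_inv_rev, mul_inv_rev, ib]; group, hbk r, inv_pow, inv_inv]
    rw [h2, ← pow_add, show r + r = 2 * r by ring]
  have hsum : ∑ r ∈ Finset.range m,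
      ((if t = (x⁻¹) ^ r * (b * a * b) * x ^ r then 1 else 0)
        + (if t = (x⁻¹) ^ r * b * x ^ r then 1 else 0) : ℕ)
      = ∑ k ∈ Finset.range (2 * m), (if b * t = x ^ k then 1 else 0 : ℕ) := by
    rw [← sum_range_double (fun k => (if b * t = x ^ k then 1 else 0 : ℕ)) m]
    refine Finset.sum_congr rfl fun r _ => ?_
    rw [if_congr (cond1 r) rfl rfl, if_congr (cond2 r) rfl rfl]
  rw [hsum, sum_range_split]
  have : ∀ k, (if b * t = x ^ (m + k) then 1 else 0 : ℕ) = (if b * t = x ^ k then 1 else 0) := by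
    intro k
    rw [pow_add, hx, one_mul]
  simp only [this]
  exact ⟨_, rfl⟩

theorem count_ris_altword (i j : B) (m : ℕ) (t : W) :
    (cs.rightInvSeq (altword i j m)).count t
      = ∑ r ∈ Finset.range m,
        ((if t = ((cs.simple i * cs.simple j)⁻¹) ^ r * (cs.simple j * cs.simple i * cs.simple j) *
            (cs.simple i * cs.simple j) ^ r then 1 else 0)
          + (if t = ((cs.simple i * cs.simple j)⁻¹) ^ r * cs.simple j *
            (cs.simple i * cs.simple j) ^ r then 1 else 0) : ℕ) := by
  set x := cs.simple i * cs.simple j with hx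
  induction m with
  | zero => simp [altword]
  | succ m ih =>
    have hris : cs.rightInvSeq (altword i j (m + 1)) =
        ((cs.wordProd (j :: altword i j m))⁻¹ * cs.simple i * cs.wordProd (j :: altword i j m))
          :: ((cs.wordProd (altword i j m))⁻¹ * cs.simple j * cs.wordProd (altword i j m))
          :: cs.rightInvSeq (altword i j m) := rfl
    have hπ : cs.wordProd (altword i j m) = x ^ m := altword_prod cs i j m
    have hπ' : cs.wordProd (j :: altword i j m) = cs.simple j * x ^ m := by
      rw [cs.wordProd_cons, hπ]
    have hA : (cs.wordProd (j :: altword i j m))⁻¹ * cs.simple i * cs.wordProd (j :: altword i j m)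
        = (x⁻¹) ^ m * (cs.simple j * cs.simple i * cs.simple j) * x ^ m := by
      rw [hπ', mul_inv_rev, cs.inv_simple, inv_pow]
      group
    have hB : (cs.wordProd (altword i j m))⁻¹ * cs.simple j * cs.wordProd (altword i j m)
        = (x⁻¹) ^ m * cs.simple j * x ^ m := by
      rw [hπ, inv_pow]
    rw [hris, List.count_cons, List.count_cons, ih, hA, hB, Finset.sum_range_succ]
    simp only [beq_iff_eq]
    have e1 : ∀ (P : Prop) (u v : W), (if u = v then (1:ℕ) else 0) = (if v = u then 1 else 0) := by
      intro _ u v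
      rcases eq_or_ne u v with h | h
      · rw [if_pos h, if_pos h.symm]
      · rw [if_neg h, if_neg (Ne.symm h)]
    rw [e1 True _ t, e1 True _ t]
    ring

theorem eta_liftable : M.IsLiftable (eta cs) := by
  intro i j
  have hpow : ∀ n : ℕ, (eta cs i * eta cs j) ^ n = ((altword i j n).map (eta cs)).prod := by
    intro n
    induction n with
    | zero => simp [altword]
    | succ n ih =>
      rw [pow_succ', ih, altword]
      simp only [List.map_cons, List.prod_cons]
      rw [← mul_assoc]
  rw [hpow (M i j)]
  funext p
  rw [eta_prod]
  have hπ1 : cs.wordProd (altword i j (M i j)) = 1 := by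
    rw [altword_prod, cs.simple_mul_simple_pow]
  have heven : ¬ Odd ((cs.rightInvSeq (altword i j (M i j))).count p.1) := by
    rw [Nat.not_odd_iff_even, count_ris_altword]
    exact pure_even (cs.simple i) (cs.simple j) (cs.simple_mul_simple_self i)
      (cs.simple_mul_simple_self j) (M i j) (cs.simple_mul_simple_pow i j) p.1
  rw [hπ1, if_neg heven]
  show _ = p
  simp

/-- The cocycle homomorphism. -/
noncomputable def phi : W →* Function.End (W × Bool) := cs.lift ⟨eta cs, eta_liftable cs⟩

theorem phi_wordProd (l : List B) : phi cs (cs.wordProd l) = (l.map (eta cs)).prod := by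
  induction l with
  | nil => simp [phi]
  | cons i l ih =>
    rw [cs.wordProd_cons, map_mul, ih, List.map_cons, List.prod_cons]
    congr 1
    exact cs.lift_apply_simple (eta_liftable cs) i

theorem odd_count_ris_congr {l l' : List B} (h : cs.wordProd l = cs.wordProd l') (t : W) :
    Odd ((cs.rightInvSeq l).count t) ↔ Odd ((cs.rightInvSeq l').count t) := by
  have e1 := eta_prod cs l (t, false)
  have e2 := eta_prod cs l' (t, false)
  rw [← phi_wordProd, h, phi_wordProd] at e1
  rw [e1] at e2
  have hsnd := congrArg Prod.snd e2
  simp only at hsnd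
  by_cases h1 : Odd ((cs.rightInvSeq l).count t) <;>
    by_cases h2 : Odd ((cs.rightInvSeq l').count t)
  · exact iff_of_true h1 h2
  · rw [if_pos h1, if_neg h2] at hsnd
    simp at hsnd
  · rw [if_neg h1, if_pos h2] at hsnd
    simp at hsnd
  · exact iff_of_false h1 h2

theorem odd_count_lis_congr {l l' : List B} (h : cs.wordProd l = cs.wordProd l') (t : W) :
    Odd ((cs.leftInvSeq l).count t) ↔ Odd ((cs.leftInvSeq l').count t) := by
  have key : ∀ ll : List B, (cs.leftInvSeq ll).count t = (cs.rightInvSeq ll.reverse).count t := by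
    intro ll
    rw [cs.rightInvSeq_reverse, List.count_reverse]
  rw [key, key]
  exact odd_count_ris_congr cs (by rw [cs.wordProd_reverse, cs.wordProd_reverse, h]) t

theorem lis_append (α β : List B) :
    cs.leftInvSeq (α ++ β)
      = cs.leftInvSeq α ++ (cs.leftInvSeq β).map (MulAut.conj (cs.wordProd α)) := by
  induction α with
  | nil =>
    simp
  | cons a α ih =>
    have h1 : cs.leftInvSeq ((a :: α) ++ β)
        = cs.simple a :: (cs.leftInvSeq (α ++ β)).map (MulAut.conj (cs.simple a)) := rfl
    have h2 : cs.leftInvSeq (a :: α)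
        = cs.simple a :: (cs.leftInvSeq α).map (MulAut.conj (cs.simple a)) := rfl
    rw [h1, ih, h2, List.map_append, List.map_map, cs.wordProd_cons, map_mul]
    simp [List.cons_append]

theorem good_step (i : B) (l : List B) (h : Odd ((cs.leftInvSeq l).count (cs.wordProd l))) :
    Odd ((cs.leftInvSeq (i :: (l ++ [i]))).count
      (cs.simple i * cs.wordProd l * cs.simple i)) := by
  set d := cs.wordProd l with hd
  have h1 : cs.leftInvSeq (i :: (l ++ [i]))
      = cs.simple i :: (cs.leftInvSeq (l ++ [i])).map (MulAut.conj (cs.simple i)) := rfl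
  have h2 : cs.leftInvSeq (l ++ [i]) = (cs.leftInvSeq l).concat (d * cs.simple i * d⁻¹) := by
    rw [← List.concat_eq_append, cs.leftInvSeq_concat]
  have hu : cs.simple i * d * cs.simple i = MulAut.conj (cs.simple i) d := by
    rw [MulAut.conj_apply, cs.inv_simple]
  rw [h1, h2, List.count_cons, hu, List.concat_eq_append,
    List.count_map_of_injective _ _ (MulAut.conj (cs.simple i)).injective,
    List.count_append]
  have e_head : ((MulAut.conj (cs.simple i)) d = cs.simple i) ↔ (d = cs.simple i) := by
    constructor
    · intro h'
      have := (MulAut.conj (cs.simple i)).injective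
        (a₁ := d) (a₂ := cs.simple i)
      apply this
      rw [h']
      rw [MulAut.conj_apply, cs.inv_simple, cs.simple_mul_simple_self, one_mul]
    · intro h'
      rw [h', MulAut.conj_apply, cs.inv_simple, cs.simple_mul_simple_self, one_mul]
  have e_last : (d = d * cs.simple i * d⁻¹) ↔ (d = cs.simple i) := by
    rw [eq_comm, mul_inv_eq_iff_eq_mul, mul_right_inj, eq_comm]
  have hcnt : (List.count d [d * cs.simple i * d⁻¹]) = if d = cs.simple i then 1 else 0 := by
    rw [List.count_singleton']
    exact if_congr (eq_comm.trans e_last) rfl rfl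
  rw [hcnt]
  have e_head' : (cs.simple i = (MulAut.conj (cs.simple i)) d) ↔ (d = cs.simple i) := by
    rw [eq_comm]
    exact e_head
  simp only [beq_iff_eq]
  rw [if_congr e_head' rfl rfl]
  rcases h with ⟨k, hk⟩
  by_cases hds : d = cs.simple i
  · simp only [if_pos hds]
    exact ⟨k + 1, by omega⟩
  · simp only [if_neg hds]
    exact ⟨k, by omega⟩

theorem good_palindrome (c l : List B) (h : Odd ((cs.leftInvSeq l).count (cs.wordProd l))) :
    Odd ((cs.leftInvSeq (c ++ l ++ c.reverse)).count
      (cs.wordProd c * cs.wordProd l * (cs.wordProd c)⁻¹)) := by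
  induction c using List.reverseRecOn generalizing l with
  | nil => simpa using h
  | append_singleton c₀ i ih =>
    have hlist : (c₀ ++ [i]) ++ l ++ (c₀ ++ [i]).reverse
        = c₀ ++ (i :: (l ++ [i])) ++ c₀.reverse := by
      simp [List.append_assoc]
    rw [hlist]
    have hmid : cs.wordProd (i :: (l ++ [i]))
        = cs.simple i * cs.wordProd l * cs.simple i := by
      rw [cs.wordProd_cons, cs.wordProd_append, cs.wordProd_singleton, mul_assoc]
    have := ih (i :: (l ++ [i])) (by rw [hmid]; exact good_step cs i l h)
    rw [hmid] at this
    convert this using 2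
    rw [cs.wordProd_append, cs.wordProd_singleton, mul_inv_rev, cs.inv_simple]
    group

theorem reflection_good {t : W} (ht : cs.IsReflection t) :
    ∃ ν : List B, cs.wordProd ν = t ∧ Odd ((cs.leftInvSeq ν).count t) := by
  obtain ⟨w, k, rfl⟩ := ht
  obtain ⟨c, -, hc⟩ := cs.exists_reduced_word' w
  refine ⟨c ++ [k] ++ c.reverse, ?_, ?_⟩
  · rw [cs.wordProd_append, cs.wordProd_append, cs.wordProd_singleton, cs.wordProd_reverse, hc]
  · have h1 : Odd ((cs.leftInvSeq [k]).count (cs.wordProd [k])) := by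
      rw [cs.wordProd_singleton]
      simp [CoxeterSystem.leftInvSeq_singleton]
    have := good_palindrome cs c [k] h1
    rw [cs.wordProd_singleton] at this
    rw [← hc] at this
    exact this

/-- Strong exchange: if `t` is a left inversion of `w`, then `t` appears in the left
inversion sequence of any reduced word for `w`. -/
theorem strong_exchange {t w : W} (ht : cs.IsReflection t)
    (hlt : cs.length (t * w) < cs.length w) {ρ : List B} (hρ : cs.IsReduced ρ)
    (hπ : cs.wordProd ρ = w) : t ∈ cs.leftInvSeq ρ := by
  obtain ⟨μ, hμred, hμπ⟩ := cs.exists_reduced_word' (t * w)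
  obtain ⟨ν, hνπ, hνodd⟩ := reflection_good cs ht
  have htt : t * t = 1 := ht.mul_self
  have hππ : cs.wordProd (ν ++ μ) = w := by
    rw [cs.wordProd_append, hνπ, ← hμπ, ← mul_assoc, htt, one_mul]
  have hzero : (cs.leftInvSeq μ).count t = 0 := by
    rw [List.count_eq_zero]
    intro hmem
    have hinv := cs.isLeftInversion_of_mem_leftInvSeq hμred hmem
    rw [← hμπ] at hinv
    have h2 := hinv.2
    rw [← mul_assoc, htt, one_mul] at h2
    omega
  have hodd : Odd ((cs.leftInvSeq ρ).count t) := by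
    rw [odd_count_lis_congr cs (hπ.trans hππ.symm) t, lis_append, List.count_append, hνπ]
    have hmap : ((cs.leftInvSeq μ).map (MulAut.conj t)).count t = (cs.leftInvSeq μ).count t := by
      have hfix : (MulAut.conj t) t = t := by
        rw [MulAut.conj_apply]
        group
      have hcmi := List.count_map_of_injective (cs.leftInvSeq μ) (⇑(MulAut.conj t))
        (MulAut.conj t).injective t
      rw [hfix] at hcmi
      exact hcmi
    rw [hmap, hzero, add_zero]
    exact hνodd
  have : (cs.leftInvSeq ρ).count t ≠ 0 := by
    rcases hodd with ⟨k, hk⟩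
    omega
  exact List.count_pos_iff.mp (Nat.pos_of_ne_zero this)

theorem exists_eraseIdx {t w : W} (ht : cs.IsReflection t)
    (hlt : cs.length (t * w) < cs.length w) {ρ : List B} (hρ : cs.IsReduced ρ)
    (hπ : cs.wordProd ρ = w) :
    ∃ k, k < ρ.length ∧ cs.wordProd (ρ.eraseIdx k) = t * w := by
  have hmem := strong_exchange cs ht hlt hρ hπ
  obtain ⟨k, hk, hget⟩ := List.mem_iff_getElem.mp hmem
  refine ⟨k, by simpa using hk, ?_⟩
  have hgetD : (cs.leftInvSeq ρ).getD k 1 = t := by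
    rw [List.getD_eq_getElem _ _ hk, hget]
  rw [← cs.getD_leftInvSeq_mul_wordProd ρ k, hgetD, hπ]

theorem descent_sub {w : W} {i : B} (hd : cs.length (cs.simple i * w) < cs.length w)
    {ρ : List B} (hρ : cs.IsReduced ρ) (hπ : cs.wordProd ρ = w) :
    ∃ μ, μ.Sublist ρ ∧ cs.IsReduced μ ∧ cs.wordProd μ = cs.simple i * w := by
  obtain ⟨k, hk, hkπ⟩ := exists_eraseIdx cs (cs.isReflection_simple i) hd hρ hπ
  refine ⟨ρ.eraseIdx k, List.eraseIdx_sublist ρ k, ?_, hkπ⟩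
  have hlen : (ρ.eraseIdx k).length + 1 = ρ.length := List.length_eraseIdx_add_one hk
  have hup : cs.length (cs.simple i * w) + 1 = cs.length w := by
    rcases cs.length_simple_mul w i with h | h
    · omega
    · exact h
  have : cs.length (cs.wordProd (ρ.eraseIdx k)) = cs.length (cs.simple i * w) := by rw [hkπ]
  unfold CoxeterSystem.IsReduced
  rw [this]
  have hρlen : cs.length w = ρ.length := by rw [← hπ]; exact hρ
  omega

theorem exists_reduced_sublist (ω : List B) :
    ∃ ω', ω'.Sublist ω ∧ cs.IsReduced ω' ∧ cs.wordProd ω' = cs.wordProd ω := by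
  induction ω with
  | nil => exact ⟨[], List.Sublist.refl _, by simp [CoxeterSystem.IsReduced], rfl⟩
  | cons i ω₀ ih =>
    obtain ⟨ω', hsub, hred, hπ⟩ := ih
    rcases cs.length_simple_mul (cs.wordProd ω₀) i with hup | hdown
    · refine ⟨i :: ω', hsub.cons₂ i, ?_, ?_⟩
      · unfold CoxeterSystem.IsReduced
        rw [cs.wordProd_cons, hπ, hup, List.length_cons]
        have : cs.length (cs.wordProd ω₀) = ω'.length := by rw [← hπ]; exact hred
        omega
      · rw [cs.wordProd_cons, cs.wordProd_cons, hπ]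
    · have hd : cs.length (cs.simple i * cs.wordProd ω₀) < cs.length (cs.wordProd ω₀) := by
        omega
      have hd' : cs.length (cs.simple i * cs.wordProd ω') < cs.length (cs.wordProd ω') := by
        rw [hπ]; exact hd
      obtain ⟨μ, hμsub, hμred, hμπ⟩ := descent_sub cs hd' hred rfl
      refine ⟨μ, (hμsub.trans hsub).trans (List.sublist_cons_self i ω₀), hμred, ?_⟩
      rw [hμπ, hπ, cs.wordProd_cons]

/-- One step of the (left) Bruhat chain order. -/
def cstep (u w : W) : Prop :=
  ∃ t, cs.IsReflection t ∧ w = t * u ∧ cs.length u < cs.length w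

/-- The (left) Bruhat chain order. -/
def cle : W → W → Prop := Relation.ReflTransGen (cstep cs)

theorem cle_subword {u w : W} (h : cle cs u w) :
    ∀ ρ : List B, cs.IsReduced ρ → cs.wordProd ρ = w →
      ∃ σ, σ.Sublist ρ ∧ cs.IsReduced σ ∧ cs.wordProd σ = u := by
  induction h with
  | refl => exact fun ρ hρ hπ => ⟨ρ, List.Sublist.refl _, hρ, hπ⟩
  | tail hchain hstep ih =>
    rename_i b c
    obtain ⟨t, ht, hc, hlen⟩ := hstep
    intro ρ hρ hπ
    have hinv : cs.length (t * c) < cs.length c := by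
      rw [hc, ← mul_assoc, ht.mul_self, one_mul, ← hc]
      exact hlen
    obtain ⟨k, hk, hkπ⟩ := exists_eraseIdx cs ht hinv hρ hπ
    have htc : t * c = b := by
      rw [hc, ← mul_assoc, ht.mul_self, one_mul]
    obtain ⟨μ, hμsub, hμred, hμπ⟩ := exists_reduced_sublist cs (ρ.eraseIdx k)
    rw [hkπ, htc] at hμπ
    obtain ⟨σ, hσsub, hσred, hσπ⟩ := ih μ hμred hμπ
    exact ⟨σ, (hσsub.trans hμsub).trans (List.eraseIdx_sublist ρ k), hσred, hσπ⟩

theorem cle_bruhatLE {u w : W} (h : cle cs u w) : bruhatLE cs u w := by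
  obtain ⟨ρ, hρred, hρπ⟩ := cs.exists_reduced_word' w
  obtain ⟨σ, hσsub, -, hσπ⟩ := cle_subword cs h ρ hρred hρπ.symm
  exact ⟨ρ, hρred, hρπ.symm, σ, hσsub, hσπ⟩

theorem bruhatLE_length {u w : W} (h : bruhatLE cs u w) : cs.length u ≤ cs.length w := by
  obtain ⟨ρ, hρred, hρπ, σ, hσsub, hσπ⟩ := h
  calc cs.length u = cs.length (cs.wordProd σ) := by rw [hσπ]
    _ ≤ σ.length := cs.length_wordProd_le σ
    _ ≤ ρ.length := hσsub.length_le
    _ = cs.length w := by rw [← hρπ]; exact hρred.symm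

theorem bruhatLT_simple_iff {w : W} {i : B} :
    bruhatLT cs w (cs.simple i * w) ↔ cs.length w < cs.length (cs.simple i * w) := by
  constructor
  · intro ⟨hle, hne⟩
    have := bruhatLE_length cs hle
    have hne' := cs.length_simple_mul_ne w i
    omega
  · intro h
    obtain ⟨ρ, hρred, hρπ⟩ := cs.exists_reduced_word' w
    have hred : cs.IsReduced (i :: ρ) := by
      unfold CoxeterSystem.IsReduced
      rw [cs.wordProd_cons, ← hρπ, List.length_cons]
      have h1 : cs.length w = ρ.length := by rw [hρπ]; exact hρred
      rcases cs.length_simple_mul w i with h2 | h2 <;> omega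
    constructor
    · exact ⟨i :: ρ, hred, by rw [cs.wordProd_cons, ← hρπ], ρ,
        List.sublist_cons_self i ρ, hρπ.symm⟩
    · intro heq
      rw [← heq] at h
      omega

/-- Property Z statement at level `n`. -/
def ZS (n : ℕ) : Prop := ∀ (i : B) (u w : W), cle cs u w →
  cs.length u < cs.length (cs.simple i * u) → cs.length w < cs.length (cs.simple i * w) →
  cs.length (cs.simple i * w) = n → cle cs (cs.simple i * u) (cs.simple i * w)

/-- Subword-implies-chain statement at level `n`. -/
def BS (n : ℕ) : Prop := ∀ ρ : List B, cs.IsReduced ρ → ρ.length = n →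
  ∀ σ, σ.Sublist ρ → cle cs (cs.wordProd σ) (cs.wordProd ρ)

/-- Descent lifting statement at level `n`. -/
def LS (n : ℕ) : Prop := ∀ (i : B) (u v : W), cle cs u v →
  cs.length (cs.simple i * v) < cs.length v →
  cs.length u < cs.length (cs.simple i * u) →
  cs.length v = n → cle cs (cs.simple i * u) v

theorem master : ∀ n : ℕ, ZS cs n ∧ BS cs n ∧ LS cs n := by
  intro n
  induction n using Nat.strong_induction_on with
  | _ n ih =>
  have hZ : ZS cs n := by
    intro i u w hchain hu hw hn
    rcases Relation.ReflTransGen.cases_tail hchain with heq | ⟨v, huv, hvw⟩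
    · rw [heq]
      exact Relation.ReflTransGen.refl
    · obtain ⟨t, ht, hwv, hlvw⟩ := hvw
      by_cases hcase : cs.length v < cs.length (cs.simple i * v)
      · have e1 : cs.length (cs.simple i * v) = cs.length v + 1 := by
          rcases cs.length_simple_mul v i with hh | hh <;> omega
        have e2 : cs.length (cs.simple i * w) = cs.length w + 1 := by
          rcases cs.length_simple_mul w i with hh | hh <;> omega
        have hlt : cs.length (cs.simple i * v) < n := by omega
        have hzv := (ih _ hlt).1 i u v huv hu hcase rfl
        refine hzv.tail ⟨cs.simple i * t * cs.simple i, ?_, ?_, ?_⟩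
        · have := ht.conj (cs.simple i)
          rwa [cs.inv_simple] at this
        · rw [hwv]
          simp [mul_assoc, cs.simple_mul_simple_cancel_left]
        · omega
      · have hdown : cs.length (cs.simple i * v) < cs.length v := by
          have := cs.length_simple_mul_ne v i
          omega
        have hlt : cs.length v < n := by omega
        have hlv := (ih _ hlt).2.2 i u v huv hdown hu rfl
        exact (hlv.tail ⟨t, ht, hwv, hlvw⟩).tail
          ⟨cs.simple i, cs.isReflection_simple i, rfl, hw⟩
  have hB : BS cs n := by
    intro ρ hred hlen σ hsub
    cases ρ with
    | nil =>
      rw [List.sublist_nil.mp hsub]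
      exact Relation.ReflTransGen.refl
    | cons j ρ₀ =>
      have hπcons : cs.wordProd (j :: ρ₀) = cs.simple j * cs.wordProd ρ₀ := cs.wordProd_cons j ρ₀
      have hlρ : cs.length (cs.wordProd (j :: ρ₀)) = ρ₀.length + 1 := by
        have := hred
        unfold CoxeterSystem.IsReduced at this
        rw [this, List.length_cons]
      have h1 : cs.length (cs.wordProd ρ₀) ≤ ρ₀.length := cs.length_wordProd_le ρ₀
      have h2 : cs.length (cs.simple j * cs.wordProd ρ₀) ≤ cs.length (cs.wordProd ρ₀) + 1 := by
        rcases cs.length_simple_mul (cs.wordProd ρ₀) j with hh | hh <;> omega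
      have hred₀ : cs.IsReduced ρ₀ := by
        unfold CoxeterSystem.IsReduced
        rw [hπcons] at hlρ
        omega
      have hasc : cs.length (cs.wordProd ρ₀) < cs.length (cs.simple j * cs.wordProd ρ₀) := by
        rw [hπcons] at hlρ
        unfold CoxeterSystem.IsReduced at hred₀
        omega
      have hlen₀ : ρ₀.length < n := by
        rw [List.length_cons] at hlen
        omega
      rcases List.sublist_cons_iff.mp hsub with hcase | ⟨σ₀, rfl, hσ₀⟩
      · have hc := (ih ρ₀.length hlen₀).2.1 ρ₀ hred₀ rfl σ hcase
        refine hc.tail ⟨cs.simple j, cs.isReflection_simple j, hπcons, ?_⟩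
        rw [hπcons]
        exact hasc
      · have hc := (ih ρ₀.length hlen₀).2.1 ρ₀ hred₀ rfl σ₀ hσ₀
        by_cases hcc : cs.length (cs.simple j * cs.wordProd σ₀) < cs.length (cs.wordProd σ₀)
        · have hstep : cstep cs (cs.wordProd (j :: σ₀)) (cs.wordProd σ₀) := by
            refine ⟨cs.simple j, cs.isReflection_simple j, ?_, ?_⟩
            · rw [cs.wordProd_cons, cs.simple_mul_simple_cancel_left]
            · rw [cs.wordProd_cons]
              exact hcc
          exact (Relation.ReflTransGen.head hstep hc).tail
            ⟨cs.simple j, cs.isReflection_simple j, hπcons, by rw [hπcons]; exact hasc⟩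
        · have hccup : cs.length (cs.wordProd σ₀) < cs.length (cs.simple j * cs.wordProd σ₀) := by
            have := cs.length_simple_mul_ne (cs.wordProd σ₀) j
            omega
          have hlevel : cs.length (cs.simple j * cs.wordProd ρ₀) = n := by
            rw [hπcons] at hlρ
            rw [List.length_cons] at hlen
            omega
          have := hZ j (cs.wordProd σ₀) (cs.wordProd ρ₀) hc hccup hasc hlevel
          rw [cs.wordProd_cons, cs.wordProd_cons]
          exact this
  have hL : LS cs n := by
    intro i u v hchain hdv hu hn
    rcases Relation.ReflTransGen.cases_tail hchain with heq | ⟨v', huv', hv'v⟩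
    · exfalso
      rw [heq] at hdv
      omega
    · obtain ⟨t, ht, hvv', hlv'⟩ := hv'v
      by_cases hc : cs.length (cs.simple i * v') < cs.length v'
      · have := (ih (cs.length v') (by omega)).2.2 i u v' huv' hc hu rfl
        exact this.tail ⟨t, ht, hvv', hlv'⟩
      · have hup : cs.length v' < cs.length (cs.simple i * v') := by
          have := cs.length_simple_mul_ne v' i
          omega
        have hZle : ∀ m ≤ n, ZS cs m := by
          intro m hm
          rcases lt_or_eq_of_le hm with hlt | rfl
          · exact (ih m hlt).1
          · exact hZ
        have hlev : cs.length (cs.simple i * v') ≤ n := by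
          rcases cs.length_simple_mul v' i with hh | hh <;> omega
        have h1 : cle cs (cs.simple i * u) (cs.simple i * v') :=
          hZle _ hlev i u v' huv' hu hup rfl
        obtain ⟨ρv, hρred, hρπ⟩ := cs.exists_reduced_word' v
        obtain ⟨μ, hμsub, hμred, hμπ⟩ := descent_sub cs hdv hρred hρπ.symm
        have hρ'π : cs.wordProd (i :: μ) = v := by
          rw [cs.wordProd_cons, hμπ, cs.simple_mul_simple_cancel_left]
        have hμlen : μ.length = cs.length (cs.simple i * v) := by
          have := hμred
          unfold CoxeterSystem.IsReduced at this
          rw [hμπ] at this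
          omega
        have hρ'red : cs.IsReduced (i :: μ) := by
          unfold CoxeterSystem.IsReduced
          rw [hρ'π, List.length_cons]
          rcases cs.length_simple_mul v i with hh | hh <;> omega
        have hinvt : cs.length (t * v) < cs.length v := by
          have htv : t * v = v' := by rw [hvv', ← mul_assoc, ht.mul_self, one_mul]
          rw [htv]
          exact hlv'
        obtain ⟨k, hk, hkπ⟩ := exists_eraseIdx cs ht hinvt hρ'red hρ'π
        have hkv' : cs.wordProd ((i :: μ).eraseIdx k) = v' := by
          rw [hkπ, hvv', ← mul_assoc, ht.mul_self, one_mul]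
        match k with
        | 0 =>
          have hμv' : cs.wordProd μ = v' := hkv'
          have hsv : cs.simple i * v' = v := by
            rw [← hμv', hμπ, cs.simple_mul_simple_cancel_left]
          rw [hsv] at h1
          exact h1
        | Nat.succ k =>
          have herase : (i :: μ).eraseIdx (k + 1) = i :: μ.eraseIdx k := rfl
          have hsv' : cs.wordProd (μ.eraseIdx k) = cs.simple i * v' := by
            rw [herase, cs.wordProd_cons] at hkv'
            rw [← hkv', cs.simple_mul_simple_cancel_left]
          have hρ'len : (i :: μ).length = n := by
            have := hρ'red
            unfold CoxeterSystem.IsReduced at this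
            rw [hρ'π] at this
            omega
          have h2 := hB (i :: μ) hρ'red hρ'len (μ.eraseIdx k)
            ((List.eraseIdx_sublist μ k).trans (List.sublist_cons_self i μ))
          rw [hρ'π, hsv'] at h2
          exact h1.trans h2
  exact ⟨hZ, hB, hL⟩

theorem main_chain (ω : List B) :
    ∀ τ : List B, τ.Sublist ω → cle cs (cs.wordProd τ) (dprodWord cs ω) := by
  induction ω with
  | nil =>
    intro τ hτ
    rw [List.sublist_nil.mp hτ]
    have : dprodWord cs [] = cs.wordProd [] := by simp [dprodWord]
    rw [this]
    exact Relation.ReflTransGen.refl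
  | cons i rest ih =>
    intro τ hτ
    have hfold : dprodWord cs (i :: rest) = demL cs i (dprodWord cs rest) := rfl
    set w := dprodWord cs rest with hw
    by_cases hup : cs.length w < cs.length (cs.simple i * w)
    · have hblt : bruhatLT cs w (cs.simple i * w) := (bruhatLT_simple_iff cs).mpr hup
      have hdem : demL cs i w = cs.simple i * w := by
        simp only [demL, if_pos hblt]
      rw [hfold, hdem]
      rcases List.sublist_cons_iff.mp hτ with hcase | ⟨τ₀, rfl, hτ₀⟩
      · exact (ih τ hcase).tail ⟨cs.simple i, cs.isReflection_simple i, rfl, hup⟩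
      · have h₀ := ih τ₀ hτ₀
        rw [cs.wordProd_cons]
        by_cases hu : cs.length (cs.simple i * cs.wordProd τ₀) < cs.length (cs.wordProd τ₀)
        · have hstep : cstep cs (cs.simple i * cs.wordProd τ₀) (cs.wordProd τ₀) :=
            ⟨cs.simple i, cs.isReflection_simple i,
              (cs.simple_mul_simple_cancel_left i).symm, hu⟩
          exact (Relation.ReflTransGen.head hstep h₀).tail
            ⟨cs.simple i, cs.isReflection_simple i, rfl, hup⟩
        · have hu' : cs.length (cs.wordProd τ₀) < cs.length (cs.simple i * cs.wordProd τ₀) := by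
            have := cs.length_simple_mul_ne (cs.wordProd τ₀) i
            omega
          exact (master cs (cs.length (cs.simple i * w))).1 i _ w h₀ hu' hup rfl
    · have hdown : cs.length (cs.simple i * w) < cs.length w := by
        have := cs.length_simple_mul_ne w i
        omega
      have hnlt : ¬ bruhatLT cs w (cs.simple i * w) := by
        rw [bruhatLT_simple_iff]
        omega
      have hdem : demL cs i w = w := by
        simp only [demL, if_neg hnlt]
      rw [hfold, hdem]
      rcases List.sublist_cons_iff.mp hτ with hcase | ⟨τ₀, rfl, hτ₀⟩
      · exact ih τ hcase
      · have h₀ := ih τ₀ hτ₀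
        rw [cs.wordProd_cons]
        by_cases hu : cs.length (cs.simple i * cs.wordProd τ₀) < cs.length (cs.wordProd τ₀)
        · have hstep : cstep cs (cs.simple i * cs.wordProd τ₀) (cs.wordProd τ₀) :=
            ⟨cs.simple i, cs.isReflection_simple i,
              (cs.simple_mul_simple_cancel_left i).symm, hu⟩
          exact Relation.ReflTransGen.head hstep h₀
        · have hu' : cs.length (cs.wordProd τ₀) < cs.length (cs.simple i * cs.wordProd τ₀) := by
            have := cs.length_simple_mul_ne (cs.wordProd τ₀) i
            omega
          exact (master cs (cs.length w)).2.2 i _ w h₀ hdown hu' rfl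

theorem subexpr_to_sublist (us : List B) (gs : List W)
    (h : List.Forall₂ (fun g j => g = 1 ∨ g = cs.simple j) gs us) :
    ∃ τ : List B, τ.Sublist us ∧ cs.wordProd τ = gs.prod := by
  induction h with
  | nil => exact ⟨[], List.Sublist.refl _, by simp⟩
  | @cons g j gs' us' hgj htail ih =>
    obtain ⟨τ, hsub, hπ⟩ := ih
    rcases hgj with rfl | rfl
    · exact ⟨τ, hsub.cons j, by rw [hπ, List.prod_cons, one_mul]⟩
    · exact ⟨j :: τ, hsub.cons₂ j, by rw [cs.wordProd_cons, hπ, List.prod_cons]⟩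

/-- The product of a subexpression of `(s_1, …, s_l)` is at most the Demazure
product `s_1 * ⋯ * s_l` in Bruhat order. -/
theorem subexpr_prod_le_demazure {l : ℕ} (u : Fin l → B) (γ : Fin l → W)
    (hγ : IsSubexpr cs u γ) :
    bruhatLE cs ((List.ofFn γ).prod) (dprodFn cs u) := by
  have hf : List.Forall₂ (fun g j => g = 1 ∨ g = cs.simple j) (List.ofFn γ) (List.ofFn u) := by
    rw [List.forall₂_iff_get]
    refine ⟨by simp, ?_⟩
    intro k h1 h2
    rw [List.get_ofFn, List.get_ofFn]
    exact hγ _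
  obtain ⟨τ, hsub, hπ⟩ := subexpr_to_sublist cs _ _ hf
  have hmc := main_chain cs (List.ofFn u) τ hsub
  rw [hπ] at hmc
  exact cle_bruhatLE cs hmc

end DBS
end

section
/- Let G be a simply connected complex semisimple group, α a simple root with fundamental weight λ_α. For any z ∈ ℂ and g ∈ G, Δ_{λ_α}(x_α(z) g) = Δ_{λ_α}(g) + z Δ_{s_α λ_α, λ_α}(g), where x_α(z) = exp(z e_α) and Δ denotes the generalized minor. -/
/-- For `G = SL(n,ℂ)` and the `i`-th simple root `α` (1-indexed, `1 ≤ i < n`):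
`Δ_{λ_α}(x_α(z) g) = Δ_{λ_α}(g) + z Δ_{s_α λ_α, λ_α}(g)`, where `Δ_{λ_α}` is the
leading principal `i×i` minor, `x_α(z) = 1 + z E_{i,i+1}`, and
`Δ_{s_α λ_α, λ_α}` is the minor with rows `{1,…,i-1,i+1}` and columns `{1,…,i}`. -/
theorem minor_expansion (n i : ℕ) (hi : 1 ≤ i) (hin : i < n) (z : ℂ)
    (g : Matrix (Fin n) (Fin n) ℂ) (hg : g.det = 1) :
    (((1 + z • Matrix.single (⟨i - 1, by omega⟩ : Fin n)
          (⟨i, hin⟩ : Fin n) (1 : ℂ)) * g).submatrix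
        (Fin.castLE hin.le) (Fin.castLE hin.le)).det =
      (g.submatrix (Fin.castLE hin.le) (Fin.castLE hin.le)).det +
        z * (g.submatrix
          (fun j : Fin i => if (j : ℕ) = i - 1 then (⟨i, hin⟩ : Fin n)
            else ⟨(j : ℕ), lt_trans j.isLt hin⟩)
          (Fin.castLE hin.le)).det := by
  set A := g.submatrix (Fin.castLE hin.le) (Fin.castLE hin.le) with hA
  set k : Fin i := ⟨i - 1, by omega⟩ with hk
  set r : Fin i → ℂ := fun j => g ⟨i, hin⟩ (Fin.castLE hin.le j) with hr
  have hM : (((1 + z • Matrix.single (⟨i - 1, by omega⟩ : Fin n)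
          (⟨i, hin⟩ : Fin n) (1 : ℂ)) * g).submatrix
        (Fin.castLE hin.le) (Fin.castLE hin.le))
      = A.updateRow k (A k + z • r) := by
    ext a b
    rw [Matrix.submatrix_apply, Matrix.add_mul, Matrix.one_mul, Matrix.smul_mul,
      Matrix.add_apply, Matrix.smul_apply, Matrix.updateRow_apply]
    by_cases hab : a = k
    · have hc : Fin.castLE hin.le a = (⟨i - 1, by omega⟩ : Fin n) := by
        subst hab; ext; simp [hk]
      rw [if_pos hab, hc, Matrix.single_mul_apply_same, one_mul]
      subst hab
      simp [hA, hr, hc]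
    · have hc : Fin.castLE hin.le a ≠ (⟨i - 1, by omega⟩ : Fin n) := by
        intro h; exact hab (by ext; simpa [Fin.ext_iff, hk] using h)
      rw [if_neg hab, Matrix.single_mul_apply_of_ne _ _ _ _ _ hc,
        smul_zero, add_zero, hA, Matrix.submatrix_apply]
  have h2 : A.updateRow k r = g.submatrix
      (fun j : Fin i => if (j : ℕ) = i - 1 then (⟨i, hin⟩ : Fin n)
        else ⟨(j : ℕ), lt_trans j.isLt hin⟩) (Fin.castLE hin.le) := by
    ext a b
    rw [Matrix.updateRow_apply, Matrix.submatrix_apply]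
    by_cases hab : a = k
    · rw [if_pos hab, if_pos (by rw [hab])]
    · rw [if_neg hab, if_neg (by simpa [hk, Fin.ext_iff] using hab)]
      rfl
  rw [hM, Matrix.det_updateRow_add, Matrix.det_updateRow_smul, Matrix.updateRow_eq_self, h2]
end

section
/- Let V be a vector space over a field K, v_1,...,v_n ∈ V, φ_1,...,φ_n ∈ V*, and for 1 ≤ k < j ≤ n suppose given linear operators M_{jk} on V. Let m be the n×n lower triangular matrix with diagonal entries 1 and m_{jk} = φ_k(M_{jk} v_j) for k < j, and let l = m^{-1}. Then there exist linear operators L_{jk} on V, defined recursively by L_{jk}(x) = -Σ_{i=k+1}^{j-1} φ_i(L_{ji} x) M_{ik} v_i - M_{jk} x, such that l_{jk} = φ_k(L_{jk} v_j) for all 1 ≤ k < j ≤ n. -/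
noncomputable def LopAux {K : Type*} [Field K] {V : Type*} [AddCommGroup V] [Module K V]
    {n : ℕ} (v : Fin n → V) (φ : Fin n → (V →ₗ[K] K))
    (Mop : Fin n → Fin n → (V →ₗ[K] V)) (j k : Fin n) : V →ₗ[K] V :=
  -(∑ i ∈ (Finset.Ioo k j).attach,
      LinearMap.smulRight ((φ i.1).comp (LopAux v φ Mop j i.1)) (Mop i.1 k (v i.1)))
    - Mop j k
termination_by (j : ℕ) - (k : ℕ)
decreasing_by
  have h := Finset.mem_Ioo.mp i.2
  have h1 : (k : ℕ) < (i.1 : ℕ) := h.1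
  have h2 : (i.1 : ℕ) < (j : ℕ) := h.2
  omega

lemma LopAux_apply {K : Type*} [Field K] {V : Type*} [AddCommGroup V] [Module K V]
    {n : ℕ} (v : Fin n → V) (φ : Fin n → (V →ₗ[K] K))
    (Mop : Fin n → Fin n → (V →ₗ[K] V)) (j k : Fin n) (x : V) :
    LopAux v φ Mop j k x =
      -(∑ i ∈ Finset.Ioo k j, φ i (LopAux v φ Mop j i x) • Mop i k (v i)) - Mop j k x := by
  rw [LopAux]
  simp only [LinearMap.sub_apply, LinearMap.neg_apply, LinearMap.coe_sum,
    Finset.sum_apply, LinearMap.smulRight_apply, LinearMap.comp_apply]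
  rw [Finset.sum_attach (Finset.Ioo k j) (fun i => φ i (LopAux v φ Mop j i x) • Mop i k (v i))]

/-- Lemma 4.12: given vectors `v_j`, functionals `φ_k`, and operators `M_{jk}`, let
`m` be the lower triangular matrix with unit diagonal and `m_{jk} = φ_k(M_{jk} v_j)`
for `k < j`. Then there exist operators `L_{jk}`, defined recursively by
`L_{jk}(x) = -Σ_{i=k+1}^{j-1} φ_i(L_{ji} x) M_{ik} v_i - M_{jk} x`, with
`(m⁻¹)_{jk} = φ_k(L_{jk} v_j)` for all `k < j`. -/
theorem inverse_unitriangular_entries (K : Type*) [Field K] (V : Type*)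
    [AddCommGroup V] [Module K V] (n : ℕ) (v : Fin n → V)
    (φ : Fin n → (V →ₗ[K] K)) (Mop : Fin n → Fin n → (V →ₗ[K] V))
    (m : Matrix (Fin n) (Fin n) K)
    (hm : ∀ j k : Fin n,
      m j k = if j = k then 1 else if k < j then φ k (Mop j k (v j)) else 0) :
    ∃ Lop : Fin n → Fin n → (V →ₗ[K] V),
      (∀ j k : Fin n, k < j → ∀ x : V,
        Lop j k x =
          -(∑ i ∈ Finset.Ioo k j, φ i (Lop j i x) • Mop i k (v i)) - Mop j k x) ∧
      ∀ j k : Fin n, k < j → m⁻¹ j k = φ k (Lop j k (v j)) := by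
  set L := LopAux v φ Mop with hL
  refine ⟨L, fun j k _ x => LopAux_apply v φ Mop j k x, ?_⟩
  set B : Matrix (Fin n) (Fin n) K :=
    fun j k => if j = k then 1 else if k < j then φ k (L j k (v j)) else 0 with hB
  have key : B * m = 1 := by
    ext j k
    rw [Matrix.mul_apply]
    rcases lt_trichotomy j k with hjk | hjk | hjk
    · have hz : ∀ i : Fin n, B j i * m i k = 0 := by
        intro i
        rw [hm]
        simp only [hB]
        split_ifs <;> try ring
        all_goals (exfalso; simp only [Fin.lt_def, Fin.ext_iff] at *; omega)
      have : (1 : Matrix (Fin n) (Fin n) K) j k = 0 := by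
        rw [Matrix.one_apply_ne (ne_of_lt hjk)]
      simp [hz, this]
    · subst hjk
      have hz : ∀ i : Fin n, B j i * m i j = if i = j then 1 else 0 := by
        intro i
        rw [hm]
        simp only [hB]
        split_ifs <;> try ring
        all_goals (exfalso; simp only [Fin.lt_def, Fin.ext_iff] at *; omega)
      simp [hz, Matrix.one_apply]
    · -- k < j
      have hptw : ∀ i : Fin n, B j i * m i k =
          (if i = k then φ k (L j k (v j)) else 0)
          + (if i = j then φ k (Mop j k (v j)) else 0)
          + (if i ∈ Finset.Ioo k j then φ i (L j i (v j)) * φ k (Mop i k (v i)) else 0) := by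
        intro i
        rw [hm]
        simp only [hB, Finset.mem_Ioo]
        split_ifs <;> (try subst_vars) <;> (try ring) <;>
          first
          | simp_all
          | (exfalso; simp only [Fin.lt_def, Fin.ext_iff, not_and, not_lt] at *; omega)
      rw [Finset.sum_congr rfl (fun i _ => hptw i)]
      rw [Finset.sum_add_distrib, Finset.sum_add_distrib]
      rw [Finset.sum_ite_eq' Finset.univ k, Finset.sum_ite_eq' Finset.univ j]
      have hLval : φ k (L j k (v j)) =
          -(∑ i ∈ Finset.Ioo k j, φ i (L j i (v j)) * φ k (Mop i k (v i)))
            - φ k (Mop j k (v j)) := by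
        rw [hL, LopAux_apply, map_sub, map_neg, map_sum]
        simp [smul_eq_mul]
      have hsum : (∑ i : Fin n, if i ∈ Finset.Ioo k j then
          φ i (L j i (v j)) * φ k (Mop i k (v i)) else 0)
          = ∑ i ∈ Finset.Ioo k j, φ i (L j i (v j)) * φ k (Mop i k (v i)) := by
        rw [Finset.sum_ite_mem, Finset.univ_inter]
      rw [hsum]
      have h1 : (1 : Matrix (Fin n) (Fin n) K) j k = 0 :=
        Matrix.one_apply_ne (ne_of_gt hjk)
      rw [h1, hLval]
      simp only [Finset.mem_univ, if_pos]
      ring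
  have hinv : m⁻¹ = B := Matrix.inv_eq_left_inv key
  intro j k hk
  rw [hinv]
  simp only [hB]
  rw [if_neg (ne_of_gt hk), if_pos hk]
end
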